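/- Suppose u₁, u₂ and ũ₁, ũ₂ are two pairs of linearly independent solutions of u'' + q(t)·u = 0 on an interval I, and suppose there is a nowhere-vanishing function a : I → ℝ with ũᵢ(t) = a(t)·uᵢ(t) for i = 1,2 and all t ∈ I. Then a is constant. -/

import Mathlib

open Set Filter Topology

private lemma constAux {lo hi : ℝ} {f : ℝ → ℝ}
    (hf : ∀ x ∈ Set.Ioo lo hi, HasDerivAt f 0 x) {s t : ℝ}
    (hs : s ∈ Set.Ioo lo hi) (ht : t ∈ Set.Ioo lo hi) : f s = f t := by
  wlog h : s ≤ t with H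
  · exact (H hf ht hs (le_of_not_ge h)).symm
  have hsub : Set.Icc s t ⊆ Set.Ioo lo hi := Set.Icc_subset_Ioo hs.1 ht.2
  have hcont : ContinuousOn f (Set.Icc s t) := fun x hx =>
    ((hf x (hsub hx)).continuousAt).continuousWithinAt
  have := constant_of_has_deriv_right_zero hcont
    (fun x hx => ((hf x (hsub (Set.mem_Icc_of_Ico hx))).hasDerivWithinAt)) t
    (Set.right_mem_Icc.mpr h)
  exact this.symm

private lemma keyAux {u₁ u₂ v₁ v₂ a : ℝ → ℝ} {t : ℝ}
    (du₁ : DifferentiableAt ℝ u₁ t) (du₂ : DifferentiableAt ℝ u₂ t)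
    (dv₁ : DifferentiableAt ℝ v₁ t)
    (h1 : ∀ᶠ x in 𝓝 t, v₁ x = a x * u₁ x)
    (h2 : ∀ᶠ x in 𝓝 t, v₂ x = a x * u₂ x)
    (hne : u₁ t ≠ 0) :
    v₁ t * deriv v₂ t - v₂ t * deriv v₁ t
      = a t ^ 2 * (u₁ t * deriv u₂ t - u₂ t * deriv u₁ t) := by
  set g : ℝ → ℝ := fun x => v₁ x / u₁ x with hg
  have hEv : ∀ᶠ x in 𝓝 t, u₁ x ≠ 0 := du₁.continuousAt.eventually_ne hne
  have haeq : ∀ᶠ x in 𝓝 t, a x = g x := by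
    filter_upwards [h1, hEv] with x hx hx0
    show a x = v₁ x / u₁ x
    rw [hx, mul_div_assoc, div_self hx0, mul_one]
  have hv1g : v₁ =ᶠ[𝓝 t] fun x => g x * u₁ x := by
    filter_upwards [h1, haeq] with x hx hxa
    rw [hx, hxa]
  have hv2g : v₂ =ᶠ[𝓝 t] fun x => g x * u₂ x := by
    filter_upwards [h2, haeq] with x hx hxa
    rw [hx, hxa]
  have dg : DifferentiableAt ℝ g t := dv₁.div du₁ hne
  have hd2 : deriv v₂ t = deriv g t * u₂ t + g t * deriv u₂ t := by
    rw [hv2g.deriv_eq, deriv_fun_mul dg du₂]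
  have hd1 : deriv v₁ t = deriv g t * u₁ t + g t * deriv u₁ t := by
    rw [hv1g.deriv_eq, deriv_fun_mul dg du₁]
  have e1 : v₁ t = g t * u₁ t := hv1g.self_of_nhds
  have e2 : v₂ t = g t * u₂ t := hv2g.self_of_nhds
  have ea : a t = g t := haeq.self_of_nhds
  rw [hd1, hd2, e1, e2, ea]
  ring

/-- If two pairs of linearly independent solutions of `u'' + q u = 0` differ by a
nowhere-vanishing factor `a`, then `a` is constant. -/
theorem proportional_solution_pairs_constant_factor (lo hi : ℝ)
    (q u₁ u₂ v₁ v₂ a : ℝ → ℝ)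
    (hq : ContinuousOn q (Set.Ioo lo hi))
    (hu₁ : ContDiffOn ℝ 2 u₁ (Set.Ioo lo hi))
    (hu₂ : ContDiffOn ℝ 2 u₂ (Set.Ioo lo hi))
    (hv₁ : ContDiffOn ℝ 2 v₁ (Set.Ioo lo hi))
    (hv₂ : ContDiffOn ℝ 2 v₂ (Set.Ioo lo hi))
    (hodeu₁ : ∀ t ∈ Set.Ioo lo hi, deriv (deriv u₁) t + q t * u₁ t = 0)
    (hodeu₂ : ∀ t ∈ Set.Ioo lo hi, deriv (deriv u₂) t + q t * u₂ t = 0)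
    (hodev₁ : ∀ t ∈ Set.Ioo lo hi, deriv (deriv v₁) t + q t * v₁ t = 0)
    (hodev₂ : ∀ t ∈ Set.Ioo lo hi, deriv (deriv v₂) t + q t * v₂ t = 0)
    (hWu : ∀ t ∈ Set.Ioo lo hi, u₁ t * deriv u₂ t - u₂ t * deriv u₁ t ≠ 0)
    (hWv : ∀ t ∈ Set.Ioo lo hi, v₁ t * deriv v₂ t - v₂ t * deriv v₁ t ≠ 0)
    (ha : ∀ t ∈ Set.Ioo lo hi, a t ≠ 0)
    (hprop₁ : ∀ t ∈ Set.Ioo lo hi, v₁ t = a t * u₁ t)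
    (hprop₂ : ∀ t ∈ Set.Ioo lo hi, v₂ t = a t * u₂ t) :
    ∀ s ∈ Set.Ioo lo hi, ∀ t ∈ Set.Ioo lo hi, a s = a t := by
  intro s hs t ht
  set S := Set.Ioo lo hi with hSdef
  have hS : IsOpen S := isOpen_Ioo
  -- differentiability facts
  have hdiff : ∀ (u : ℝ → ℝ), ContDiffOn ℝ 2 u S →
      (∀ x ∈ S, DifferentiableAt ℝ u x) ∧ (∀ x ∈ S, DifferentiableAt ℝ (deriv u) x) := by
    intro u hu
    have h1 : DifferentiableOn ℝ u S := hu.differentiableOn (by norm_num)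
    have h2 : ContDiffOn ℝ 1 (deriv u) S := hu.deriv_of_isOpen hS (by norm_num)
    have h3 : DifferentiableOn ℝ (deriv u) S := h2.differentiableOn (by norm_num)
    exact ⟨fun x hx => (h1 x hx).differentiableAt (hS.mem_nhds hx),
      fun x hx => (h3 x hx).differentiableAt (hS.mem_nhds hx)⟩
  obtain ⟨du₁, du₁'⟩ := hdiff u₁ hu₁
  obtain ⟨du₂, du₂'⟩ := hdiff u₂ hu₂
  obtain ⟨dv₁, dv₁'⟩ := hdiff v₁ hv₁
  obtain ⟨dv₂, dv₂'⟩ := hdiff v₂ hv₂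
  -- Wronskians are constant
  have hWconst : ∀ (w₁ w₂ : ℝ → ℝ),
      (∀ x ∈ S, DifferentiableAt ℝ w₁ x) → (∀ x ∈ S, DifferentiableAt ℝ w₂ x) →
      (∀ x ∈ S, DifferentiableAt ℝ (deriv w₁) x) → (∀ x ∈ S, DifferentiableAt ℝ (deriv w₂) x) →
      (∀ x ∈ S, deriv (deriv w₁) x + q x * w₁ x = 0) →
      (∀ x ∈ S, deriv (deriv w₂) x + q x * w₂ x = 0) →
      (fun x => w₁ x * deriv w₂ x - w₂ x * deriv w₁ x) s
        = (fun x => w₁ x * deriv w₂ x - w₂ x * deriv w₁ x) t := by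
    intro w₁ w₂ d1 d2 d1' d2' o1 o2
    refine constAux (f := fun x => w₁ x * deriv w₂ x - w₂ x * deriv w₁ x) (fun x hx => ?_) hs ht
    have h1 : HasDerivAt w₁ (deriv w₁ x) x := (d1 x hx).hasDerivAt
    have h2 : HasDerivAt w₂ (deriv w₂ x) x := (d2 x hx).hasDerivAt
    have h1' : HasDerivAt (deriv w₁) (deriv (deriv w₁) x) x := (d1' x hx).hasDerivAt
    have h2' : HasDerivAt (deriv w₂) (deriv (deriv w₂) x) x := (d2' x hx).hasDerivAt
    have := (h1.mul h2').sub (h2.mul h1')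
    refine this.congr_deriv (Eq.symm ?_)
    have e1 := o1 x hx
    have e2 := o2 x hx
    linear_combination w₂ x * e1 - w₁ x * e2
  have hWuC := hWconst u₁ u₂ du₁ du₂ du₁' du₂' hodeu₁ hodeu₂
  have hWvC := hWconst v₁ v₂ dv₁ dv₂ dv₁' dv₂' hodev₁ hodev₂
  simp only at hWuC hWvC
  -- pointwise key identity
  have hkey : ∀ x ∈ S, v₁ x * deriv v₂ x - v₂ x * deriv v₁ x
      = a x ^ 2 * (u₁ x * deriv u₂ x - u₂ x * deriv u₁ x) := by
    intro x hx
    have h1 : ∀ᶠ y in 𝓝 x, v₁ y = a y * u₁ y :=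
      Filter.eventually_of_mem (hS.mem_nhds hx) hprop₁
    have h2 : ∀ᶠ y in 𝓝 x, v₂ y = a y * u₂ y :=
      Filter.eventually_of_mem (hS.mem_nhds hx) hprop₂
    rcases (by
      by_contra hcon
      push_neg at hcon
      exact hWu x hx (by rw [hcon.1, hcon.2]; ring) : u₁ x ≠ 0 ∨ u₂ x ≠ 0) with h | h
    · exact keyAux (du₁ x hx) (du₂ x hx) (dv₁ x hx) h1 h2 h
    · have := keyAux (du₂ x hx) (du₁ x hx) (dv₂ x hx) h2 h1 h
      linarith [this]
  -- squares equal
  have hsq : a s ^ 2 = a t ^ 2 := by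
    have e1 := hkey s hs
    have e2 := hkey t ht
    have hWune := hWu t ht
    have : a s ^ 2 * (u₁ t * deriv u₂ t - u₂ t * deriv u₁ t)
        = a t ^ 2 * (u₁ t * deriv u₂ t - u₂ t * deriv u₁ t) := by
      rw [← e2]
      rw [hWuC] at e1
      rw [← e1, hWvC]
    exact mul_right_cancel₀ hWune this
  -- continuity of a on S
  have hacont : ∀ x ∈ S, ContinuousAt a x := by
    intro x hx
    have h1 : ∀ᶠ y in 𝓝 x, v₁ y = a y * u₁ y :=
      Filter.eventually_of_mem (hS.mem_nhds hx) hprop₁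
    have h2 : ∀ᶠ y in 𝓝 x, v₂ y = a y * u₂ y :=
      Filter.eventually_of_mem (hS.mem_nhds hx) hprop₂
    rcases (by
      by_contra hcon
      push_neg at hcon
      exact hWu x hx (by rw [hcon.1, hcon.2]; ring) : u₁ x ≠ 0 ∨ u₂ x ≠ 0) with h | h
    · have hEv : ∀ᶠ y in 𝓝 x, u₁ y ≠ 0 := (du₁ x hx).continuousAt.eventually_ne h
      have haeq : (fun y => v₁ y / u₁ y) =ᶠ[𝓝 x] a := by
        filter_upwards [h1, hEv] with y hy hy0
        field_simp [hy]
        rw [hy, mul_comm]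
      exact (((dv₁ x hx).continuousAt.div (du₁ x hx).continuousAt h)).congr haeq
    · have hEv : ∀ᶠ y in 𝓝 x, u₂ y ≠ 0 := (du₂ x hx).continuousAt.eventually_ne h
      have haeq : (fun y => v₂ y / u₂ y) =ᶠ[𝓝 x] a := by
        filter_upwards [h2, hEv] with y hy hy0
        field_simp [hy]
        rw [hy, mul_comm]
      exact (((dv₂ x hx).continuousAt.div (du₂ x hx).continuousAt h)).congr haeq
  -- conclude
  by_contra hne
  have hopp : a s = -a t := by
    have : (a s - a t) * (a s + a t) = 0 := by nlinarith [hsq]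
    rcases mul_eq_zero.mp this with h | h
    · exact absurd (by linarith) hne
    · linarith
  have hsub : Set.uIcc s t ⊆ S := Set.OrdConnected.uIcc_subset Set.ordConnected_Ioo hs ht
  have hconts : ContinuousOn a (Set.uIcc s t) := fun x hx =>
    (hacont x (hsub hx)).continuousWithinAt
  have h0 : (0 : ℝ) ∈ Set.uIcc (a s) (a t) := by
    rcases lt_or_gt_of_ne (ha t ht) with h | h
    · apply Set.mem_uIcc.mpr; right; constructor <;> [linarith; linarith [ha s hs]]
    · apply Set.mem_uIcc.mpr; left; constructor <;> [linarith [hopp]; linarith]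
  obtain ⟨x, hx, hx0⟩ := intermediate_value_uIcc hconts h0
  exact ha x (hsub hx) hx0
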